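/- arXiv:1407.4406 — 3 statements merged into one kernel-verified Lean document; each statement's English description precedes it below -/
import Mathlib

section
/- Let V be an n-dimensional real inner product space, ξ ∈ V nonzero, and η a symmetric bilinear form on V. Then ⟨ξ ⊗ ξ − |ξ|² g, η⟩² ≤ (n−1)|ξ|⁴ |η|², where ⟨·,·⟩ is the Hilbert–Schmidt inner product on symmetric bilinear forms, with equality when η = ξ ⊗ ξ − |ξ|² g. -/
open Finset

noncomputable def normSq (n : ℕ) (ξ : Fin n → ℝ) : ℝ := ∑ i, ξ i ^ 2

noncomputable def tensorSq (n : ℕ) (ξ : Fin n → ℝ) : Fin n → Fin n → ℝ :=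
  fun i j => ξ i * ξ j

noncomputable def gform (n : ℕ) : Fin n → Fin n → ℝ :=
  fun i j => if i = j then 1 else 0

noncomputable def hsInner (n : ℕ) (A B : Fin n → Fin n → ℝ) : ℝ :=
  ∑ i, ∑ j, A i j * B i j

noncomputable def traceForm (n : ℕ) (η : Fin n → Fin n → ℝ) : ℝ := ∑ i, η i i

noncomputable def trComp (n : ℕ) (η : Fin n → Fin n → ℝ) : Fin n → Fin n → ℝ :=
  fun i j => ∑ k, η k i * η k j

/-- Cauchy–Schwarz bound `⟨ξ⊗ξ - |ξ|²g, η⟩² ≤ (n-1)|ξ|⁴|η|²` for every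
symmetric bilinear form `η`, with equality when `η = ξ⊗ξ - |ξ|²g`. -/
theorem stmt_1 (n : ℕ) (ξ : Fin n → ℝ) (hξ : ξ ≠ 0)
    (η : Fin n → Fin n → ℝ) (hsym : ∀ i j, η i j = η j i) :
    (hsInner n (fun i j => tensorSq n ξ i j - normSq n ξ * gform n i j) η) ^ 2
      ≤ ((n : ℝ) - 1) * (normSq n ξ) ^ 2 * hsInner n η η
    ∧ ((∀ i j, η i j = tensorSq n ξ i j - normSq n ξ * gform n i j) →
        (hsInner n (fun i j => tensorSq n ξ i j - normSq n ξ * gform n i j) η) ^ 2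
          = ((n : ℝ) - 1) * (normSq n ξ) ^ 2 * hsInner n η η) := by
  set A : Fin n → Fin n → ℝ := fun i j => tensorSq n ξ i j - normSq n ξ * gform n i j with hA
  have hAA : hsInner n A A = ((n : ℝ) - 1) * (normSq n ξ) ^ 2 := by
    have h1 : ∀ i : Fin n, ∑ j, A i j * A i j
        = ξ i ^ 2 * normSq n ξ - 2 * normSq n ξ * ξ i ^ 2 + normSq n ξ ^ 2 := by
      intro i
      have : ∀ j : Fin n, A i j * A i j
          = ξ i ^ 2 * ξ j ^ 2
            - (if i = j then 2 * normSq n ξ * ξ i ^ 2 else 0)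
            + (if i = j then normSq n ξ ^ 2 else 0) := by
        intro j
        simp only [hA, tensorSq, gform]
        by_cases h : i = j <;> simp [h] <;> ring
      simp only [this, Finset.sum_add_distrib, Finset.sum_sub_distrib,
        Finset.sum_ite_eq, Finset.mem_univ, if_true, ← Finset.mul_sum]
      rw [normSq]
    simp only [hsInner, h1, Finset.sum_add_distrib, Finset.sum_sub_distrib,
      Finset.sum_const, Finset.card_univ, Fintype.card_fin, nsmul_eq_mul,
      ← Finset.sum_mul, ← Finset.mul_sum]
    rw [← normSq]
    ring
  have hprod : ∀ B C : Fin n → Fin n → ℝ,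
      hsInner n B C = ∑ p : Fin n × Fin n, B p.1 p.2 * C p.1 p.2 := by
    intro B C
    rw [hsInner, Fintype.sum_prod_type]
  have hCS : (hsInner n A η) ^ 2 ≤ hsInner n A A * hsInner n η η := by
    rw [hprod A η, hprod A A, hprod η η]
    have := sum_mul_sq_le_sq_mul_sq Finset.univ (fun p : Fin n × Fin n => A p.1 p.2)
      (fun p : Fin n × Fin n => η p.1 p.2)
    simpa [sq] using this
  constructor
  · calc (hsInner n A η) ^ 2 ≤ hsInner n A A * hsInner n η η := hCS
      _ = ((n : ℝ) - 1) * (normSq n ξ) ^ 2 * hsInner n η η := by rw [hAA]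
  · intro heq
    have hη : η = A := funext fun i => funext fun j => heq i j
    rw [hη, hAA]
    ring
end

section
/- Let V be an n-dimensional real inner product space (n ≥ 2), c > 0, and a ≤ −1/(2(n−1)). Then there exist a nonzero ξ ∈ V and a nonzero symmetric bilinear form η on V (namely η = |ξ|²g − ξ⊗ξ) such that c·( (1/2)|ξ|⁴|η|² + a·⟨ξ⊗ξ − |ξ|²g, η⟩² ) ≤ 0. Hence the symbol fails to be strongly elliptic. -/
open Finset

/-- failure of strong ellipticity when `a ≤ -1/(2(n-1))`: there are a
nonzero `ξ` and a nonzero symmetric `η` (namely `η = |ξ|²g - ξ⊗ξ`) with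
`c((1/2)|ξ|⁴|η|² + a⟨ξ⊗ξ - |ξ|²g, η⟩²) ≤ 0`. -/
theorem stmt_3 (n : ℕ) (hn : 2 ≤ n) (c a : ℝ) (hc : 0 < c)
    (ha : a ≤ -1 / (2 * ((n : ℝ) - 1))) :
    ∃ ξ : Fin n → ℝ, ξ ≠ 0 ∧
      ∃ η : Fin n → Fin n → ℝ, η ≠ 0 ∧ (∀ i j, η i j = η j i) ∧
        (∀ i j, η i j = normSq n ξ * gform n i j - tensorSq n ξ i j) ∧
        c * ((1 / 2) * (normSq n ξ) ^ 2 * hsInner n η η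
            + a * (hsInner n (fun i j => tensorSq n ξ i j - normSq n ξ * gform n i j) η) ^ 2)
          ≤ 0 := by
  have hn0 : 0 < n := by omega
  set i0 : Fin n := ⟨0, hn0⟩ with hi0
  set i1 : Fin n := ⟨1, by omega⟩ with hi1
  have h01 : i0 ≠ i1 := by
    simp [hi0, hi1, Fin.ext_iff]
  set ξ : Fin n → ℝ := fun i => if i = i0 then 1 else 0 with hξ
  have hns : normSq n ξ = 1 := by
    simp [normSq, hξ, apply_ite (· ^ 2)]
  set η : Fin n → Fin n → ℝ :=
    fun i j => normSq n ξ * gform n i j - tensorSq n ξ i j with hη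
  have hηval : ∀ i j, η i j = (if i = j then 1 else 0) - (if i = i0 then 1 else 0) * (if j = i0 then 1 else 0) := by
    intro i j
    simp only [hη, hns]
    simp [gform, tensorSq, hξ]
  refine ⟨ξ, ?_, η, ?_, ?_, fun i j => rfl, ?_⟩
  · intro h
    have := congrFun h i0
    simp [hξ] at this
  · intro h
    have := congrFun (congrFun h i1) i1
    rw [hηval] at this
    simp [h01.symm] at this
  · intro i j
    rw [hηval, hηval]
    by_cases h : i = j
    · simp [h]
    · simp only [if_neg h, if_neg (Ne.symm h)]; ring
  · have key : ∀ i j : Fin n, η i j * η i j =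
        (if i = j then 1 else 0) - 2 * ((if i = j then 1 else 0) * (ξ i * ξ j))
          + (ξ i ^ 2) * (ξ j ^ 2) := by
      intro i j
      rw [hηval]
      by_cases h : i = j
      · subst h; by_cases h2 : i = i0 <;> simp [hξ, h2] <;> norm_num
      · simp only [if_neg h]
        by_cases hi : i = i0 <;> by_cases hj : j = i0 <;>
          simp [hξ, hi, hj] <;> ring
    have hA : ∀ i : Fin n, ∑ j, η i j * η i j = 1 - ξ i ^ 2 := by
      intro i
      rw [Finset.sum_congr rfl fun j _ => key i j]
      rw [Finset.sum_add_distrib, Finset.sum_sub_distrib, ← Finset.mul_sum,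
        ← Finset.mul_sum]
      have e1 : ∑ j, (if i = j then (1:ℝ) else 0) = 1 := by simp
      have e2 : ∑ j, (if i = j then (1:ℝ) else 0) * (ξ i * ξ j) = ξ i ^ 2 := by
        simp [ite_mul]; ring
      have e3 : (∑ j, ξ j ^ 2) = 1 := hns
      rw [e1, e2, e3]
      ring
    have hηη : hsInner n η η = (n : ℝ) - 1 := by
      unfold hsInner
      rw [Finset.sum_congr rfl fun i _ => hA i]
      rw [Finset.sum_sub_distrib]
      have : (∑ i, ξ i ^ 2) = 1 := hns
      simp [this, Finset.card_univ]
    have hinner : hsInner n (fun i j => tensorSq n ξ i j - normSq n ξ * gform n i j) η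
        = -((n : ℝ) - 1) := by
      unfold hsInner
      have hterm : ∀ i j : Fin n, (tensorSq n ξ i j - normSq n ξ * gform n i j) * η i j
          = -(η i j * η i j) := by
        intro i j
        have h1 : tensorSq n ξ i j - normSq n ξ * gform n i j = -η i j := by
          simp only [hη]; ring
        rw [h1]; ring
      rw [Finset.sum_congr rfl fun i _ =>
        Finset.sum_congr rfl fun j _ => hterm i j]
      have hneg : ∑ i : Fin n, ∑ j : Fin n, -(η i j * η i j)
          = -(∑ i : Fin n, ∑ j : Fin n, η i j * η i j) := by
        simp [Finset.sum_neg_distrib]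
      rw [hneg, show (∑ i : Fin n, ∑ j : Fin n, η i j * η i j) = hsInner n η η from rfl,
        hηη]
    rw [hinner, hηη, hns]
    have hnr : (1 : ℝ) ≤ (n : ℝ) - 1 := by
      have : (2 : ℝ) ≤ (n : ℝ) := by exact_mod_cast hn
      linarith
    have hpos : (0:ℝ) < (n:ℝ) - 1 := by linarith
    have h2 : a * (2 * ((n:ℝ) - 1)) ≤ -1 := by
      rw [le_div_iff₀ (by linarith)] at ha
      linarith
    have hX : 1 / 2 * 1 ^ 2 * ((n:ℝ) - 1) + a * (-(((n:ℝ) - 1))) ^ 2 ≤ 0 := by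
      nlinarith
    have := mul_le_mul_of_nonneg_left hX hc.le
    simpa using this
end

section
/- Let V be an n-dimensional real inner product space, ξ ∈ V nonzero, and η = |ξ|²g − ξ⊗ξ. Then for any real numbers a ≤ −1/(2(n−1)), c > 0, k ≥ 1, and any α, β ∈ ℝ, the symbol expression c|ξ|^{2k−2}[ (1/2)|ξ|⁴|η|² + (2α+2β−1)|ξ|²⟨ξ⊗ξ,tr(η⊗η)⟩ + (b−β)⟨ξ⊗ξ,η⟩² + (1/2−a−b−α)|ξ|² tr η ⟨ξ⊗ξ,η⟩ + a(|ξ|² tr η)² ] equals c(1/2 + a(n−1))|ξ|^{2k+2}|η|²/|ξ|⁴·|ξ|⁴ = c(1/2 + a(n−1))|ξ|^{2k−2}|ξ|⁴|η|² ≤ 0 for any b ∈ ℝ, so the symbol is not positive for this η. -/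
open Finset

lemma sqsum (n : ℕ) (ξ : Fin n → ℝ) : ∑ x : Fin n, ξ x * ξ x = ∑ x, ξ x ^ 2 :=
  Finset.sum_congr rfl fun x _ => (sq (ξ x)).symm

lemma dsum (n : ℕ) (ξ : Fin n → ℝ) :
    ∑ x : Fin n, ∑ y : Fin n, ξ x * ξ y * (ξ x * ξ y) = (∑ i, ξ i ^ 2) ^ 2 := by
  have h : ∀ x : Fin n, ∑ y, ξ x * ξ y * (ξ x * ξ y) = ξ x ^ 2 * ∑ y, ξ y ^ 2 := by
    intro x; rw [Finset.mul_sum]; exact Finset.sum_congr rfl (fun y _ => by ring)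
  rw [Finset.sum_congr rfl (fun x _ => h x), ← Finset.sum_mul, sq]

lemma fact1 (n : ℕ) (ξ : Fin n → ℝ) (η : Fin n → Fin n → ℝ)
    (hη : ∀ i j, η i j = normSq n ξ * gform n i j - tensorSq n ξ i j) :
    hsInner n (tensorSq n ξ) η = 0 := by
  simp only [hsInner, hη, tensorSq, gform, normSq, mul_sub, mul_ite, mul_one, mul_zero,
    Finset.sum_sub_distrib]
  simp only [Finset.sum_ite_eq, Finset.mem_univ, if_true]
  rw [dsum, ← Finset.sum_mul, sqsum, ← sq]; ring

lemma fact3 (n : ℕ) (ξ : Fin n → ℝ) (η : Fin n → Fin n → ℝ)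
    (hη : ∀ i j, η i j = normSq n ξ * gform n i j - tensorSq n ξ i j) :
    traceForm n η = ((n : ℝ) - 1) * normSq n ξ := by
  simp only [traceForm, hη, gform, tensorSq, normSq, if_true, mul_one,
    Finset.sum_sub_distrib, Finset.sum_const, Finset.card_univ, Fintype.card_fin]
  rw [sqsum]; ring

lemma fact4 (n : ℕ) (ξ : Fin n → ℝ) (η : Fin n → Fin n → ℝ)
    (hη : ∀ i j, η i j = normSq n ξ * gform n i j - tensorSq n ξ i j) :
    hsInner n η η = ((n : ℝ) - 1) * (normSq n ξ) ^ 2 := by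
  simp only [hsInner, hη, tensorSq, gform, normSq]
  have h : ∀ i j : Fin n,
      ((∑ l, ξ l ^ 2) * (if i = j then 1 else 0) - ξ i * ξ j) *
        ((∑ l, ξ l ^ 2) * (if i = j then 1 else 0) - ξ i * ξ j)
      = (if i = j then (∑ l, ξ l ^ 2) ^ 2 - 2 * (∑ l, ξ l ^ 2) * (ξ i * ξ j) else 0)
        + ξ i * ξ j * (ξ i * ξ j) := by
    intro i j; split <;> ring
  simp only [Finset.sum_congr rfl fun i (_ : i ∈ univ) =>
    Finset.sum_congr rfl fun j (_ : j ∈ univ) => h i j]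
  simp only [Finset.sum_add_distrib, Finset.sum_ite_eq, Finset.mem_univ, if_true]
  rw [dsum]
  have h2 : ∑ i : Fin n, ((∑ l, ξ l ^ 2) ^ 2 - 2 * (∑ l, ξ l ^ 2) * (ξ i * ξ i))
      = (n : ℝ) * (∑ l, ξ l ^ 2) ^ 2 - 2 * (∑ l, ξ l ^ 2) ^ 2 := by
    rw [Finset.sum_sub_distrib, Finset.sum_const, ← Finset.mul_sum, sqsum,
      Finset.card_univ, Fintype.card_fin, nsmul_eq_mul]
    ring
  rw [h2]; ring

lemma fact2 (n : ℕ) (ξ : Fin n → ℝ) (η : Fin n → Fin n → ℝ)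
    (hη : ∀ i j, η i j = normSq n ξ * gform n i j - tensorSq n ξ i j) :
    hsInner n (tensorSq n ξ) (trComp n η) = 0 := by
  set S := normSq n ξ with hS
  have htr : ∀ i j, trComp n η i j = S ^ 2 * gform n i j - S * (ξ i * ξ j) := by
    intro i j
    simp only [trComp, hη, tensorSq, gform]
    have h : ∀ l : Fin n,
        (S * (if l = i then 1 else 0) - ξ l * ξ i) * (S * (if l = j then 1 else 0) - ξ l * ξ j)
        = S ^ 2 * ((if l = i then 1 else 0) * (if l = j then 1 else 0))
          - S * (if l = i then (1:ℝ) else 0) * (ξ l * ξ j)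
          - S * (if l = j then (1:ℝ) else 0) * (ξ l * ξ i)
          + ξ l ^ 2 * (ξ i * ξ j) := by
      intro l; split <;> split <;> ring
    rw [Finset.sum_congr rfl fun l (_ : l ∈ univ) => h l]
    simp only [Finset.sum_add_distrib, Finset.sum_sub_distrib, ite_mul, one_mul, zero_mul,
      mul_ite, mul_one, mul_zero, Finset.sum_ite_eq, Finset.sum_ite_eq', Finset.mem_univ,
      if_true, ← Finset.sum_mul]
    rw [show (∑ l : Fin n, ξ l ^ 2) = S from rfl]
    by_cases hij : i = j <;> simp [hij, eq_comm] <;> ring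
  simp only [hsInner, htr, tensorSq, gform, mul_sub, mul_ite, mul_one, mul_zero,
    Finset.sum_sub_distrib]
  simp only [Finset.sum_ite_eq, Finset.mem_univ, if_true]
  have : ∀ x : Fin n, ∑ y, ξ x * ξ y * (S * (ξ x * ξ y)) = S * (ξ x ^ 2 * ∑ y, ξ y ^ 2) := by
    intro x; rw [Finset.mul_sum, Finset.mul_sum]; exact Finset.sum_congr rfl fun y _ => by ring
  rw [Finset.sum_congr rfl fun x (_ : x ∈ univ) => this x, ← Finset.mul_sum,
    ← Finset.sum_mul, ← Finset.sum_mul, show (∑ l : Fin n, ξ l ^ 2) = S from rfl,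
    sqsum, show (∑ x : Fin n, ξ x ^ 2) = S from rfl]
  ring

/-- for `η = |ξ|²g - ξ⊗ξ` with `ξ ≠ 0`, the full adjusted symbol
expression (with any coefficients `b, α, β`) evaluates to
`c(1/2 + a(n-1))|ξ|^{2k-2}|ξ|⁴|η|²`, which is `≤ 0` when `a ≤ -1/(2(n-1))`. -/
theorem stmt_19 (n k : ℕ) (hn : 2 ≤ n) (hk : 1 ≤ k) (a b c α β : ℝ)
    (hc : 0 < c) (ha : a ≤ -1 / (2 * ((n : ℝ) - 1)))
    (ξ : Fin n → ℝ) (hξ : ξ ≠ 0)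
    (η : Fin n → Fin n → ℝ)
    (hη : ∀ i j, η i j = normSq n ξ * gform n i j - tensorSq n ξ i j) :
    c * (normSq n ξ) ^ (k - 1) *
        ((1 / 2) * (normSq n ξ) ^ 2 * hsInner n η η
          + (2 * α + 2 * β - 1) * normSq n ξ * hsInner n (tensorSq n ξ) (trComp n η)
          + (b - β) * (hsInner n (tensorSq n ξ) η) ^ 2
          + (1 / 2 - a - b - α) * normSq n ξ * traceForm n η * hsInner n (tensorSq n ξ) η
          + a * (normSq n ξ * traceForm n η) ^ 2)
      = c * (1 / 2 + a * ((n : ℝ) - 1)) * (normSq n ξ) ^ (k - 1)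
          * (normSq n ξ) ^ 2 * hsInner n η η
    ∧ c * (1 / 2 + a * ((n : ℝ) - 1)) * (normSq n ξ) ^ (k - 1)
          * (normSq n ξ) ^ 2 * hsInner n η η ≤ 0 := by
  have h1 := fact1 n ξ η hη
  have h2 := fact2 n ξ η hη
  have h3 := fact3 n ξ η hη
  have h4 := fact4 n ξ η hη
  have hn1 : (0:ℝ) < (n : ℝ) - 1 := by
    have : (2:ℝ) ≤ (n:ℝ) := by exact_mod_cast hn
    linarith
  have hS : 0 ≤ normSq n ξ := Finset.sum_nonneg fun i _ => sq_nonneg _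
  have ht : 1 / 2 + a * ((n : ℝ) - 1) ≤ 0 := by
    have h := mul_le_mul_of_nonneg_right ha hn1.le
    rw [div_mul_eq_mul_div, mul_comm (2:ℝ)] at h
    have h2 : -1 * ((n:ℝ) - 1) / (((n:ℝ)-1) * 2) = -(1/2) := by
      rw [div_eq_iff (by positivity)]; ring
    linarith
  constructor
  · rw [h1, h2, h3, h4]; ring
  · rw [h4]
    have hbig : 0 ≤ (normSq n ξ) ^ (k - 1) * (normSq n ξ) ^ 2 * (((n:ℝ) - 1) * (normSq n ξ) ^ 2) := by
      positivity
    have hct : c * (1 / 2 + a * ((n : ℝ) - 1)) ≤ 0 :=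
      mul_nonpos_of_nonneg_of_nonpos hc.le ht
    calc c * (1 / 2 + a * ((n : ℝ) - 1)) * (normSq n ξ) ^ (k - 1) * (normSq n ξ) ^ 2
          * (((n:ℝ) - 1) * (normSq n ξ) ^ 2)
        = (c * (1 / 2 + a * ((n : ℝ) - 1))) *
            ((normSq n ξ) ^ (k - 1) * (normSq n ξ) ^ 2 * (((n:ℝ) - 1) * (normSq n ξ) ^ 2)) := by
          ring
      _ ≤ 0 := mul_nonpos_of_nonpos_of_nonneg hct hbig
end
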